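/- Let μ ∈ (0,1), σ² = 1 − μ², and τ ≥ 0. Let X ~ N(μ, σ²) and Y ~ N(−μ, σ²). Set α = Φ((−τ − μ)/σ) and β = Φ((−τ + μ)/σ). If β − α + (μ² − √(μ⁴ + 8μ²β))/2 > 0, then D_t > D, where D is the discrimination of X and Y and D_t is the discrimination of the ternary quantizations f_t(X; τ) and f_t(Y; τ). -/

import Mathlib

open MeasureTheory ProbabilityTheory
open Real Set
open scoped NNReal ENNReal

/-- The cumulative distribution function `Φ` of the standard normal distribution. -/
noncomputable def stdNormalCDF (x : ℝ) : ℝ :=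
  ((ProbabilityTheory.gaussianReal 0 1) (Set.Iic x)).toReal

/-- Ternary quantization with threshold `τ ≥ 0`: `1` if `x > τ`, `-1` if `x < -τ`,
`0` otherwise. -/
noncomputable def ft (τ x : ℝ) : ℝ := if x > τ then 1 else if x < -τ then -1 else 0


-- integral against gaussianReal
lemma TQ.integral_gaussianReal {m : ℝ} {v : ℝ≥0} (hv : v ≠ 0) (f : ℝ → ℝ) :
    ∫ x, f x ∂(gaussianReal m v) = ∫ x, gaussianPDFReal m v x * f x := by
  rw [gaussianReal_of_var_ne_zero _ hv]
  have h1 : gaussianPDF m v = fun x => ((Real.toNNReal (gaussianPDFReal m v x) : ℝ≥0) : ℝ≥0∞) := rfl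
  rw [h1, integral_withDensity_eq_integral_smul
    ((measurable_gaussianPDFReal m v).real_toNNReal)]
  congr 1
  ext x
  simp [NNReal.smul_def, Real.coe_toNNReal _ (gaussianPDFReal_nonneg m v x)]

lemma TQ.integrable_gaussianReal_iff {m : ℝ} {v : ℝ≥0} (hv : v ≠ 0) (f : ℝ → ℝ) :
    Integrable f (gaussianReal m v) ↔ Integrable (fun x => gaussianPDFReal m v x * f x) := by
  rw [gaussianReal_of_var_ne_zero _ hv]
  have h1 : gaussianPDF m v = fun x => ((Real.toNNReal (gaussianPDFReal m v x) : ℝ≥0) : ℝ≥0∞) := rfl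
  rw [h1, integrable_withDensity_iff_integrable_coe_smul
    ((measurable_gaussianPDFReal m v).real_toNNReal)]
  apply integrable_congr
  filter_upwards with x
  simp [NNReal.smul_def, Real.coe_toNNReal _ (gaussianPDFReal_nonneg m v x)]

lemma TQ.rpow_two_eq (x : ℝ) : x ^ (2:ℝ) = x ^ 2 := by
  rw [show (2:ℝ) = ((2:ℕ):ℝ) by norm_num, Real.rpow_natCast]

lemma TQ.integrable_sq_exp {b : ℝ} (hb : 0 < b) :
    Integrable (fun x : ℝ => x ^ 2 * Real.exp (-b * x ^ 2)) := by
  have := integrable_rpow_mul_exp_neg_mul_sq hb (s := 2) (by norm_num)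
  refine this.congr ?_
  filter_upwards with x
  rw [TQ.rpow_two_eq]

lemma TQ.integral_sq_exp {b : ℝ} (hb : 0 < b) :
    ∫ x : ℝ, x ^ 2 * Real.exp (-b * x ^ 2) = Real.sqrt (π / b) / (2 * b) := by
  have hint := TQ.integrable_sq_exp hb
  have hsplit := intervalIntegral.integral_Iic_add_Ioi (b := (0:ℝ)) (μ := volume)
      hint.integrableOn hint.integrableOn
  have hneg : (∫ x in Iic (0:ℝ), x ^ 2 * Real.exp (-b * x ^ 2))
      = ∫ x in Ioi (0:ℝ), x ^ 2 * Real.exp (-b * x ^ 2) := by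
    have h1 : (∫ x in Iic (0:ℝ), x ^ 2 * Real.exp (-b * x ^ 2))
        = ∫ x in Iic (0:ℝ), (-x) ^ 2 * Real.exp (-b * (-x) ^ 2) := by
      apply setIntegral_congr_fun measurableSet_Iic
      intro x _; ring_nf
    rw [h1, integral_comp_neg_Iic (f := fun x => x ^ 2 * Real.exp (-b * x ^ 2))]
    norm_num
  have hIoi : ∫ x in Ioi (0:ℝ), x ^ 2 * Real.exp (-b * x ^ 2)
      = b ^ (-(3/2):ℝ) * (1/2) * Real.Gamma (3/2) := by
    have h2 := integral_rpow_mul_exp_neg_mul_rpow (p := 2) (q := 2) (b := b)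
      (by norm_num) (by norm_num) hb
    norm_num at h2
    rw [← h2]
    apply setIntegral_congr_fun measurableSet_Ioi
    intro x _
    simp only [TQ.rpow_two_eq, neg_mul]
  have hGamma : Real.Gamma (3/2) = Real.sqrt π / 2 := by
    rw [show (3/2 : ℝ) = 1/2 + 1 by norm_num, Real.Gamma_add_one (by norm_num),
      Real.Gamma_one_half_eq]
    ring
  have hb32 : b ^ (-(3/2):ℝ) = 1 / (b * Real.sqrt b) := by
    rw [show (-(3/2):ℝ) = -(1 + 1/2) by norm_num, Real.rpow_neg hb.le,
      Real.rpow_add hb, Real.rpow_one, ← Real.sqrt_eq_rpow]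
    field_simp
  have : ∫ x : ℝ, x ^ 2 * Real.exp (-b * x ^ 2)
      = 2 * (b ^ (-(3/2):ℝ) * (1/2) * Real.Gamma (3/2)) := by
    rw [← hIoi, ← hsplit, hneg]; ring
  rw [this, hb32, hGamma, Real.sqrt_div Real.pi_nonneg]
  have hsb : Real.sqrt b ≠ 0 := (Real.sqrt_pos.mpr hb).ne'
  field_simp

lemma TQ.integral_id_exp {b : ℝ} (hb : 0 < b) :
    ∫ x : ℝ, x * Real.exp (-b * x ^ 2) = 0 := by
  have h := integral_neg_eq_self (fun x : ℝ => x * Real.exp (-b * x ^ 2)) volume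
  have h2 : ∫ x : ℝ, (-x) * Real.exp (-b * (-x) ^ 2)
      = - ∫ x : ℝ, x * Real.exp (-b * x ^ 2) := by
    rw [← integral_neg]
    congr 1; ext x; ring_nf
  rw [h2] at h
  linarith

section moments
variable {m : ℝ} {v : ℝ≥0}

lemma TQ.pdf_eq (hv : v ≠ 0) (x : ℝ) :
    gaussianPDFReal m v x
      = (Real.sqrt (2 * π * v))⁻¹ * Real.exp (-(2 * (v:ℝ))⁻¹ * (x - m) ^ 2) := by
  have hvpos : 0 < (v:ℝ) := NNReal.coe_pos.mpr hv.bot_lt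
  rw [gaussianPDFReal]
  congr 1
  rw [neg_div]
  congr 1
  field_simp

lemma TQ.c_mul_sqrt (hv : v ≠ 0) :
    (Real.sqrt (2 * π * (v:ℝ)))⁻¹ * Real.sqrt (π / (2 * (v:ℝ))⁻¹) = 1 := by
  have hvpos : 0 < (v:ℝ) := NNReal.coe_pos.mpr hv.bot_lt
  rw [show π / (2 * (v:ℝ))⁻¹ = 2 * π * v by field_simp]
  rw [inv_mul_cancel₀]
  positivity

lemma TQ.integrable_pdf_mul_id (hv : v ≠ 0) :
    Integrable (fun x => gaussianPDFReal m v x * x) := by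
  have hvpos : 0 < (v:ℝ) := NNReal.coe_pos.mpr hv.bot_lt
  set b : ℝ := (2 * (v:ℝ))⁻¹ with hbdef
  have hb : 0 < b := by positivity
  set c : ℝ := (Real.sqrt (2 * π * v))⁻¹ with hcdef
  have base : Integrable (fun x : ℝ => c * ((x + m) * Real.exp (-b * x ^ 2))) :=
    (((integrable_mul_exp_neg_mul_sq hb).add
      ((integrable_exp_neg_mul_sq hb).const_mul m)).const_mul c).congr
      (by filter_upwards with x; simp only [Pi.add_apply]; ring)
  have h := base.comp_sub_right m
  refine h.congr ?_
  filter_upwards with x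
  simp only [TQ.pdf_eq hv]
  rw [← hcdef, ← hbdef]
  ring_nf

lemma TQ.integrable_pdf_mul_sq (hv : v ≠ 0) :
    Integrable (fun x => gaussianPDFReal m v x * x ^ 2) := by
  have hvpos : 0 < (v:ℝ) := NNReal.coe_pos.mpr hv.bot_lt
  set b : ℝ := (2 * (v:ℝ))⁻¹ with hbdef
  have hb : 0 < b := by positivity
  set c : ℝ := (Real.sqrt (2 * π * v))⁻¹ with hcdef
  have h1 : Integrable (fun x : ℝ => x ^ 2 * Real.exp (-b * x ^ 2)) := by
    have := integrable_rpow_mul_exp_neg_mul_sq hb (s := 2) (by norm_num)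
    refine this.congr ?_
    filter_upwards with x
    rw [show (2:ℝ) = ((2:ℕ):ℝ) by norm_num, Real.rpow_natCast]
  have base : Integrable (fun x : ℝ => c * ((x + m) ^ 2 * Real.exp (-b * x ^ 2))) :=
    ((h1.add (((integrable_mul_exp_neg_mul_sq hb).const_mul (2*m)).add
      ((integrable_exp_neg_mul_sq hb).const_mul (m^2)))).const_mul c).congr
      (by filter_upwards with x; simp only [Pi.add_apply]; ring)
  have h := base.comp_sub_right m
  refine h.congr ?_
  filter_upwards with x
  simp only [TQ.pdf_eq hv]
  rw [← hcdef, ← hbdef]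
  ring_nf

lemma TQ.integral_pdf_mul_id (hv : v ≠ 0) :
    ∫ x, gaussianPDFReal m v x * x = m := by
  have hvpos : 0 < (v:ℝ) := NNReal.coe_pos.mpr hv.bot_lt
  set b : ℝ := (2 * (v:ℝ))⁻¹ with hbdef
  have hb : 0 < b := by positivity
  set c : ℝ := (Real.sqrt (2 * π * v))⁻¹ with hcdef
  have h0 : ∫ x, gaussianPDFReal m v x * x
      = ∫ x : ℝ, c * (x * Real.exp (-b * x ^ 2) + m * Real.exp (-b * x ^ 2)) := by
    rw [← integral_add_right_eq_self (fun x => gaussianPDFReal m v x * x) m]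
    congr 1; ext x
    rw [TQ.pdf_eq hv, ← hcdef, ← hbdef]
    ring_nf
  rw [h0, integral_const_mul, integral_add (integrable_mul_exp_neg_mul_sq hb)
      ((integrable_exp_neg_mul_sq hb).const_mul m), integral_const_mul,
    TQ.integral_id_exp hb, integral_gaussian]
  have hcs : c * Real.sqrt (π / b) = 1 := TQ.c_mul_sqrt hv
  linear_combination m * hcs

lemma TQ.integral_pdf_mul_sq (hv : v ≠ 0) :
    ∫ x, gaussianPDFReal m v x * x ^ 2 = (v:ℝ) + m ^ 2 := by
  have hvpos : 0 < (v:ℝ) := NNReal.coe_pos.mpr hv.bot_lt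
  set b : ℝ := (2 * (v:ℝ))⁻¹ with hbdef
  have hb : 0 < b := by positivity
  set c : ℝ := (Real.sqrt (2 * π * v))⁻¹ with hcdef
  have h1 : Integrable (fun x : ℝ => x ^ 2 * Real.exp (-b * x ^ 2)) := by
    have := integrable_rpow_mul_exp_neg_mul_sq hb (s := 2) (by norm_num)
    refine this.congr ?_
    filter_upwards with x
    rw [show (2:ℝ) = ((2:ℕ):ℝ) by norm_num, Real.rpow_natCast]
  have h0 : ∫ x, gaussianPDFReal m v x * x ^ 2
      = ∫ x : ℝ, c * (x ^ 2 * Real.exp (-b * x ^ 2) + (2*m * (x * Real.exp (-b * x ^ 2))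
          + m^2 * Real.exp (-b * x ^ 2))) := by
    rw [← integral_add_right_eq_self (fun x => gaussianPDFReal m v x * x ^ 2) m]
    congr 1; ext x
    rw [TQ.pdf_eq hv, ← hcdef, ← hbdef]
    ring_nf
  have hadd := integral_add (μ := volume) h1
    (((integrable_mul_exp_neg_mul_sq hb).const_mul (2*m)).add
      ((integrable_exp_neg_mul_sq hb).const_mul (m^2)))
  simp only [Pi.add_apply] at hadd
  rw [h0, integral_const_mul, hadd,
    integral_add ((integrable_mul_exp_neg_mul_sq hb).const_mul (2*m))
      ((integrable_exp_neg_mul_sq hb).const_mul (m^2))]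
  simp only [integral_const_mul]
  rw [TQ.integral_id_exp hb, integral_gaussian, TQ.integral_sq_exp hb]
  have hcs : c * Real.sqrt (π / b) = 1 := TQ.c_mul_sqrt hv
  have h2b : (1:ℝ)/(2*b) = (v:ℝ) := by rw [hbdef]; field_simp
  linear_combination (1/(2*b)) * hcs + m^2 * hcs + h2b

end moments

lemma TQ.gaussian_map {m σ : ℝ} (hσ : 0 < σ) :
    (gaussianReal 0 1).map (fun x => σ * x + m) = gaussianReal m (Real.toNNReal (σ^2)) := by
  have h1 : (gaussianReal 0 1).map (fun x => σ * x) = gaussianReal 0 (Real.toNNReal (σ^2)) := by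
    have := gaussianReal_map_const_mul (μ := 0) (v := 1) σ
    simp only [mul_zero] at this
    convert this using 2
    ext
    simp [Real.coe_toNNReal _ (sq_nonneg σ)]
  have h2 : (fun x => σ * x + m) = (fun x => x + m) ∘ (fun x => σ * x) := rfl
  rw [h2, ← Measure.map_map (by fun_prop) (by fun_prop), h1, gaussianReal_map_add_const]
  simp

lemma TQ.gaussianReal_Iic_eq {m σ : ℝ} (hσ : 0 < σ) (t : ℝ) :
    ((gaussianReal m (Real.toNNReal (σ^2))) (Iic t)).toReal = stdNormalCDF ((t - m)/σ) := by
  rw [← TQ.gaussian_map hσ (m := m), Measure.map_apply (by fun_prop) measurableSet_Iic]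
  congr 2
  ext x
  simp only [mem_preimage, mem_Iic]
  rw [le_div_iff₀ hσ]
  constructor <;> intro h <;> nlinarith

lemma TQ.g01_singleton (x : ℝ) : (gaussianReal 0 1 : Measure ℝ) {x} = 0 :=
  gaussianReal_absolutelyContinuous 0 (by norm_num) (measure_singleton x)

lemma TQ.gaussianReal_singleton {m : ℝ} {v : ℝ≥0} (hv : v ≠ 0) (x : ℝ) :
    (gaussianReal m v : Measure ℝ) {x} = 0 :=
  gaussianReal_absolutelyContinuous m hv (measure_singleton x)

lemma TQ.stdNormalCDF_neg (x : ℝ) : stdNormalCDF (-x) = 1 - stdNormalCDF x := by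
  have hmap : (gaussianReal 0 1).map (fun y : ℝ => -y) = gaussianReal 0 1 := by
    have := gaussianReal_map_const_mul (μ := 0) (v := 1) (-1)
    simp only [mul_zero, neg_one_mul] at this
    rw [this]
    congr 1
    ext
    norm_num
  have h1 : (gaussianReal 0 1 : Measure ℝ) (Iic (-x)) = (gaussianReal 0 1) (Ici x) := by
    conv_lhs => rw [← hmap]
    rw [Measure.map_apply (by fun_prop) measurableSet_Iic]
    congr 1
    ext y
    simp [neg_le]
  have h2 : (gaussianReal 0 1 : Measure ℝ) (Ici x)
      = 1 - (gaussianReal 0 1) (Iio x) := by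
    rw [← prob_compl_eq_one_sub measurableSet_Iio, compl_Iio]
  have h3 : (gaussianReal 0 1 : Measure ℝ) (Iio x) = (gaussianReal 0 1) (Iic x) := by
    rw [← Iic_diff_right, measure_diff_null (TQ.g01_singleton x)]
  rw [stdNormalCDF, stdNormalCDF, h1, h2, h3,
    ENNReal.toReal_sub_of_le prob_le_one (by norm_num)]
  simp

lemma TQ.stdNormalCDF_pos (x : ℝ) : 0 < stdNormalCDF x := by
  rw [stdNormalCDF, ENNReal.toReal_pos_iff]
  constructor
  · rw [pos_iff_ne_zero]
    intro h
    have := gaussianReal_absolutelyContinuous' 0 (by norm_num : (1:ℝ≥0) ≠ 0) h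
    rw [Real.volume_Iic] at this
    exact ENNReal.top_ne_zero this
  · exact lt_of_le_of_lt prob_le_one (by norm_num)

lemma TQ.stdNormalCDF_lt_one (x : ℝ) : stdNormalCDF x < 1 := by
  have h := TQ.stdNormalCDF_pos (-x)
  have := TQ.stdNormalCDF_neg x
  linarith

lemma TQ.stdNormalCDF_mono {x y : ℝ} (h : x ≤ y) : stdNormalCDF x ≤ stdNormalCDF y := by
  rw [stdNormalCDF, stdNormalCDF]
  exact ENNReal.toReal_mono (measure_ne_top _ _) (measure_mono (Iic_subset_Iic.mpr h))

lemma TQ.gaussianReal_Iio_eq {m σ : ℝ} (hσ : 0 < σ) (t : ℝ) :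
    ((gaussianReal m (Real.toNNReal (σ^2))) (Iio t)).toReal = stdNormalCDF ((t - m)/σ) := by
  have hv : Real.toNNReal (σ^2) ≠ 0 := by
    simp [Real.toNNReal_eq_zero, not_le]
    positivity
  rw [← TQ.gaussianReal_Iic_eq hσ t]
  congr 1
  rw [← Iic_diff_right, measure_diff_null (TQ.gaussianReal_singleton hv t)]

lemma TQ.gaussianReal_Ioi_eq {m σ : ℝ} (hσ : 0 < σ) (t : ℝ) :
    ((gaussianReal m (Real.toNNReal (σ^2))) (Ioi t)).toReal = 1 - stdNormalCDF ((t - m)/σ) := by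
  rw [← TQ.gaussianReal_Iic_eq hσ t, ← compl_Iic,
    prob_compl_eq_one_sub measurableSet_Iic,
    ENNReal.toReal_sub_of_le prob_le_one (by norm_num)]
  simp

lemma TQ.measurable_ft (τ : ℝ) : Measurable (ft τ) := by
  unfold ft
  exact Measurable.ite (measurableSet_Ioi (a := τ))
    measurable_const (Measurable.ite (measurableSet_Iio (a := -τ)) measurable_const measurable_const)

lemma TQ.ft_abs_le (τ x : ℝ) : |ft τ x| ≤ 1 := by
  unfold ft
  split_ifs <;> norm_num

lemma TQ.ft_eq_indicator {τ : ℝ} (hτ : 0 ≤ τ) :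
    ft τ = fun x => (Ioi τ).indicator (fun _ => (1:ℝ)) x
      + (Iio (-τ)).indicator (fun _ => (-1:ℝ)) x := by
  ext x
  unfold ft
  by_cases h1 : x > τ
  · have h2 : ¬ x < -τ := by intro h; linarith
    simp [h1, h2, indicator_of_mem, mem_Ioi, mem_Iio]
  · by_cases h2 : x < -τ <;> simp [h1, h2, mem_Ioi, mem_Iio]

lemma TQ.ft_sq_eq_indicator {τ : ℝ} (hτ : 0 ≤ τ) :
    (fun x => ft τ x ^ 2) = fun x => (Ioi τ).indicator (fun _ => (1:ℝ)) x
      + (Iio (-τ)).indicator (fun _ => (1:ℝ)) x := by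
  ext x
  unfold ft
  by_cases h1 : x > τ
  · have h2 : ¬ x < -τ := by intro h; linarith
    simp [h1, h2, mem_Ioi, mem_Iio]
  · by_cases h2 : x < -τ <;> simp [h1, h2, mem_Ioi, mem_Iio]

lemma TQ.integral_ft {τ : ℝ} (hτ : 0 ≤ τ) (ν : Measure ℝ) [IsProbabilityMeasure ν] :
    ∫ x, ft τ x ∂ν = (ν (Ioi τ)).toReal - (ν (Iio (-τ))).toReal := by
  rw [TQ.ft_eq_indicator hτ,
    integral_add ((integrable_const (1:ℝ)).indicator measurableSet_Ioi)
      ((integrable_const (-1:ℝ)).indicator measurableSet_Iio),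
    integral_indicator_const _ measurableSet_Ioi, integral_indicator_const _ measurableSet_Iio]
  simp
  rfl

lemma TQ.integral_ft_sq {τ : ℝ} (hτ : 0 ≤ τ) (ν : Measure ℝ) [IsProbabilityMeasure ν] :
    ∫ x, ft τ x ^ 2 ∂ν = (ν (Ioi τ)).toReal + (ν (Iio (-τ))).toReal := by
  rw [TQ.ft_sq_eq_indicator hτ,
    integral_add ((integrable_const (1:ℝ)).indicator measurableSet_Ioi)
      ((integrable_const (1:ℝ)).indicator measurableSet_Iio),
    integral_indicator_const _ measurableSet_Ioi, integral_indicator_const _ measurableSet_Iio]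
  simp
  rfl

lemma TQ.expect_sub_sq {Ω : Type*} [MeasureSpace Ω] [IsProbabilityMeasure (ℙ : Measure Ω)]
    {X Y : Ω → ℝ} (h : IndepFun X Y ℙ)
    (hX1 : Integrable X ℙ) (hX2 : Integrable (fun ω => X ω ^ 2) ℙ)
    (hY1 : Integrable Y ℙ) (hY2 : Integrable (fun ω => Y ω ^ 2) ℙ) :
    ∫ ω, (X ω - Y ω) ^ 2 ∂ℙ
      = (∫ ω, X ω ^ 2 ∂ℙ) - 2 * ((∫ ω, X ω ∂ℙ) * (∫ ω, Y ω ∂ℙ)) + ∫ ω, Y ω ^ 2 ∂ℙ := by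
  have hXY : Integrable (fun ω => X ω * Y ω) ℙ := h.integrable_mul hX1 hY1
  have hexp : (fun ω => (X ω - Y ω) ^ 2)
      = fun ω => (X ω ^ 2 - 2 * (X ω * Y ω)) + Y ω ^ 2 := by ext ω; ring
  calc ∫ ω, (X ω - Y ω) ^ 2 ∂ℙ
      = ∫ ω, (X ω ^ 2 - 2 * (X ω * Y ω)) + Y ω ^ 2 ∂ℙ := by rw [hexp]
    _ = (∫ ω, X ω ^ 2 - 2 * (X ω * Y ω) ∂ℙ) + ∫ ω, Y ω ^ 2 ∂ℙ :=
        integral_add (hX2.sub (hXY.const_mul 2)) hY2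
    _ = (∫ ω, X ω ^ 2 ∂ℙ) - (∫ ω, 2 * (X ω * Y ω) ∂ℙ) + ∫ ω, Y ω ^ 2 ∂ℙ := by
        rw [integral_sub hX2 (hXY.const_mul 2)]
    _ = _ := by
        rw [integral_const_mul]
        have h2 : (∫ a, X a * Y a ∂ℙ) = (∫ ω, X ω ∂ℙ) * ∫ ω, Y ω ∂ℙ :=
          h.integral_fun_mul_eq_mul_integral hX1.1 hY1.1
        rw [h2]

section transfer
variable {Ω : Type*} [MeasureSpace Ω] [IsProbabilityMeasure (ℙ : Measure Ω)]

lemma TQ.integrable_id_gaussianReal {mm : ℝ} {v : ℝ≥0} (hv : v ≠ 0) :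
    Integrable (fun x : ℝ => x) (gaussianReal mm v) := by
  rw [TQ.integrable_gaussianReal_iff hv]
  exact TQ.integrable_pdf_mul_id hv

lemma TQ.integrable_sq_gaussianReal {mm : ℝ} {v : ℝ≥0} (hv : v ≠ 0) :
    Integrable (fun x : ℝ => x ^ 2) (gaussianReal mm v) := by
  rw [TQ.integrable_gaussianReal_iff hv]
  exact TQ.integrable_pdf_mul_sq hv

lemma TQ.moment_int {X : Ω → ℝ} (hm : Measurable X) {mm : ℝ} {v : ℝ≥0} (hv : v ≠ 0)
    (hX : Measure.map X ℙ = gaussianReal mm v) :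
    Integrable X ℙ ∧ Integrable (fun ω => X ω ^ 2) ℙ
      ∧ (∫ ω, X ω ∂ℙ) = mm ∧ (∫ ω, X ω ^ 2 ∂ℙ) = (v:ℝ) + mm ^ 2 := by
  have hsm1 : AEStronglyMeasurable (fun x : ℝ => x) (Measure.map X ℙ) := by
    rw [hX]; exact aestronglyMeasurable_id
  have hsm2 : AEStronglyMeasurable (fun x : ℝ => x ^ 2) (Measure.map X ℙ) :=
    (measurable_id.pow_const 2).aestronglyMeasurable
  have hint1 : Integrable X ℙ := by
    have h : Integrable (fun x : ℝ => x) (Measure.map X ℙ) := by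
      rw [hX]; exact TQ.integrable_id_gaussianReal hv
    exact (integrable_map_measure hsm1 hm.aemeasurable).mp h
  have hint2 : Integrable (fun ω => X ω ^ 2) ℙ := by
    have h : Integrable (fun x : ℝ => x ^ 2) (Measure.map X ℙ) := by
      rw [hX]; exact TQ.integrable_sq_gaussianReal hv
    exact (integrable_map_measure hsm2 hm.aemeasurable).mp h
  refine ⟨hint1, hint2, ?_, ?_⟩
  · have h := integral_map hm.aemeasurable hsm1
    rw [hX, TQ.integral_gaussianReal hv, TQ.integral_pdf_mul_id hv] at h
    exact h.symm
  · have h := integral_map hm.aemeasurable hsm2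
    rw [hX, TQ.integral_gaussianReal hv, TQ.integral_pdf_mul_sq hv] at h
    exact h.symm

lemma TQ.ft_moment_int {X : Ω → ℝ} (hm : Measurable X) {mm σ τ : ℝ} (hσ : 0 < σ) (hτ : 0 ≤ τ)
    (hX : Measure.map X ℙ = gaussianReal mm (Real.toNNReal (σ ^ 2))) :
    Integrable (fun ω => ft τ (X ω)) ℙ ∧ Integrable (fun ω => ft τ (X ω) ^ 2) ℙ
      ∧ (∫ ω, ft τ (X ω) ∂ℙ)
          = (1 - stdNormalCDF ((τ - mm) / σ)) - stdNormalCDF ((-τ - mm) / σ)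
      ∧ (∫ ω, ft τ (X ω) ^ 2 ∂ℙ)
          = (1 - stdNormalCDF ((τ - mm) / σ)) + stdNormalCDF ((-τ - mm) / σ) := by
  have hb1 : Integrable (fun ω => ft τ (X ω)) ℙ := by
    refine Integrable.mono' (integrable_const 1)
      (((TQ.measurable_ft τ).comp hm).aestronglyMeasurable) ?_
    filter_upwards with ω
    simpa [Real.norm_eq_abs] using TQ.ft_abs_le τ (X ω)
  have hb2 : Integrable (fun ω => ft τ (X ω) ^ 2) ℙ := by
    refine Integrable.mono' (integrable_const 1)
      ((((TQ.measurable_ft τ).comp hm).pow_const 2).aestronglyMeasurable) ?_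
    filter_upwards with ω
    rw [Real.norm_eq_abs, abs_pow, ← one_pow 2]
    exact pow_le_pow_left₀ (abs_nonneg _) (TQ.ft_abs_le τ (X ω)) 2
  refine ⟨hb1, hb2, ?_, ?_⟩
  · have h := integral_map (f := ft τ) (μ := (ℙ : Measure Ω)) hm.aemeasurable
      (TQ.measurable_ft τ).aestronglyMeasurable
    rw [hX, TQ.integral_ft hτ, TQ.gaussianReal_Ioi_eq hσ, TQ.gaussianReal_Iio_eq hσ] at h
    rw [← h]
  · have h := integral_map (f := fun x => ft τ x ^ 2) (μ := (ℙ : Measure Ω)) hm.aemeasurable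
      ((TQ.measurable_ft τ).pow_const 2).aestronglyMeasurable
    rw [hX, TQ.integral_ft_sq hτ, TQ.gaussianReal_Ioi_eq hσ, TQ.gaussianReal_Iio_eq hσ] at h
    rw [← h]

end transfer
lemma TQ.final_algebra {μ α β : ℝ} (hμ0 : 0 < μ) (hμ1 : μ < 1) (hαpos : 0 < α) (hβlt : β < 1)
    (hαβ : α ≤ β)
    (hcond : β - α + (μ ^ 2 - Real.sqrt (μ ^ 4 + 8 * μ ^ 2 * β)) / 2 > 0) :
    (2 * (α + β) + 2 * (β - α) ^ 2) /
        ((2 * (α + β) - 2 * (β - α) ^ 2) + (2 * (α + β) - 2 * (β - α) ^ 2))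
      > (2 * (1 - μ ^ 2) + 4 * μ ^ 2) / (2 * (1 - μ ^ 2) + 2 * (1 - μ ^ 2)) := by
  have hsnn : 0 ≤ Real.sqrt (μ ^ 4 + 8 * μ ^ 2 * β) := Real.sqrt_nonneg _
  have hpos2 : 0 < 2 * (β - α) + μ ^ 2 := by linarith
  have hlt : μ ^ 4 + 8 * μ ^ 2 * β < (2 * (β - α) + μ ^ 2) ^ 2 :=
    (Real.sqrt_lt' hpos2).mp (by linarith)
  have key : μ ^ 2 * (α + β) < (β - α) ^ 2 := by nlinarith [hlt]
  have hsm : 0 < (α + β) - (β - α) ^ 2 := by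
    nlinarith [mul_nonneg (sub_nonneg.mpr hαβ) (by linarith : (0:ℝ) ≤ 1 - (β - α))]
  rw [gt_iff_lt, div_lt_div_iff₀ (by nlinarith) (by nlinarith)]
  nlinarith [key, hsm, sq_nonneg (β - α)]

set_option maxHeartbeats 1000000 in
/-- Ternary quantization can enhance feature discrimination: if
`β - α + (μ² - √(μ⁴ + 8μ²β))/2 > 0` then `D_t > D`. -/
theorem ternary_quantization_enhances_discrimination
    {Ω : Type*} [MeasureSpace Ω] [IsProbabilityMeasure (ℙ : Measure Ω)]
    (μ σ τ : ℝ) (hμ : μ ∈ Set.Ioo (0 : ℝ) 1) (hσpos : 0 < σ) (hσ2 : σ ^ 2 = 1 - μ ^ 2)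
    (hτ : 0 ≤ τ)
    (X₁ X₂ Y₁ Y₂ : Ω → ℝ)
    (hmX₁ : Measurable X₁) (hmX₂ : Measurable X₂)
    (hmY₁ : Measurable Y₁) (hmY₂ : Measurable Y₂)
    (hX₁ : Measure.map X₁ ℙ = gaussianReal μ (Real.toNNReal (σ ^ 2)))
    (hX₂ : Measure.map X₂ ℙ = gaussianReal μ (Real.toNNReal (σ ^ 2)))
    (hY₁ : Measure.map Y₁ ℙ = gaussianReal (-μ) (Real.toNNReal (σ ^ 2)))
    (hY₂ : Measure.map Y₂ ℙ = gaussianReal (-μ) (Real.toNNReal (σ ^ 2)))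
    (hindep : iIndepFun ![X₁, X₂, Y₁, Y₂] ℙ)
    (α β : ℝ)
    (hα : α = stdNormalCDF ((-τ - μ) / σ))
    (hβ : β = stdNormalCDF ((-τ + μ) / σ))
    (hcond : β - α + (μ ^ 2 - Real.sqrt (μ ^ 4 + 8 * μ ^ 2 * β)) / 2 > 0) :
    (∫ ω, (ft τ (X₁ ω) - ft τ (Y₁ ω)) ^ 2 ∂ℙ) /
        ((∫ ω, (ft τ (X₁ ω) - ft τ (X₂ ω)) ^ 2 ∂ℙ) +
          (∫ ω, (ft τ (Y₁ ω) - ft τ (Y₂ ω)) ^ 2 ∂ℙ)) >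
      (∫ ω, (X₁ ω - Y₁ ω) ^ 2 ∂ℙ) /
        ((∫ ω, (X₁ ω - X₂ ω) ^ 2 ∂ℙ) + (∫ ω, (Y₁ ω - Y₂ ω) ^ 2 ∂ℙ)) := by
  obtain ⟨hμ0, hμ1⟩ := hμ
  have hv : Real.toNNReal (σ ^ 2) ≠ 0 := by
    simp only [ne_eq, Real.toNNReal_eq_zero, not_le]
    positivity
  have hvco : ((Real.toNNReal (σ ^ 2) : ℝ≥0) : ℝ) = 1 - μ ^ 2 := by
    rw [Real.coe_toNNReal _ (sq_nonneg σ), hσ2]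
  -- independence of pairs
  have i01 : IndepFun X₁ X₂ ℙ := by
    simpa using hindep.indepFun (show (0 : Fin 4) ≠ 1 by decide)
  have i02 : IndepFun X₁ Y₁ ℙ := by
    simpa using hindep.indepFun (show (0 : Fin 4) ≠ 2 by decide)
  have i23 : IndepFun Y₁ Y₂ ℙ := by
    simpa using hindep.indepFun (show (2 : Fin 4) ≠ 3 by decide)
  -- moments
  obtain ⟨hX₁i, hX₁s, hX₁m, hX₁2⟩ := TQ.moment_int hmX₁ hv hX₁
  obtain ⟨hX₂i, hX₂s, hX₂m, hX₂2⟩ := TQ.moment_int hmX₂ hv hX₂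
  obtain ⟨hY₁i, hY₁s, hY₁m, hY₁2⟩ := TQ.moment_int hmY₁ hv hY₁
  obtain ⟨hY₂i, hY₂s, hY₂m, hY₂2⟩ := TQ.moment_int hmY₂ hv hY₂
  -- continuous integrals
  have hA : ∫ ω, (X₁ ω - Y₁ ω) ^ 2 ∂ℙ = 2 * (1 - μ ^ 2) + 4 * μ ^ 2 := by
    rw [TQ.expect_sub_sq i02 hX₁i hX₁s hY₁i hY₁s, hX₁2, hX₁m, hY₁2, hY₁m, hvco]; ring
  have hB : ∫ ω, (X₁ ω - X₂ ω) ^ 2 ∂ℙ = 2 * (1 - μ ^ 2) := by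
    rw [TQ.expect_sub_sq i01 hX₁i hX₁s hX₂i hX₂s, hX₁2, hX₁m, hX₂2, hX₂m, hvco]; ring
  have hC : ∫ ω, (Y₁ ω - Y₂ ω) ^ 2 ∂ℙ = 2 * (1 - μ ^ 2) := by
    rw [TQ.expect_sub_sq i23 hY₁i hY₁s hY₂i hY₂s, hY₁2, hY₁m, hY₂2, hY₂m, hvco]; ring
  -- quantized moments
  obtain ⟨qX₁i, qX₁s, qX₁m, qX₁2⟩ := TQ.ft_moment_int hmX₁ hσpos hτ hX₁
  obtain ⟨qX₂i, qX₂s, qX₂m, qX₂2⟩ := TQ.ft_moment_int hmX₂ hσpos hτ hX₂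
  obtain ⟨qY₁i, qY₁s, qY₁m, qY₁2⟩ := TQ.ft_moment_int hmY₁ hσpos hτ hY₁
  obtain ⟨qY₂i, qY₂s, qY₂m, qY₂2⟩ := TQ.ft_moment_int hmY₂ hσpos hτ hY₂
  have hXup : (1 : ℝ) - stdNormalCDF ((τ - μ) / σ) = β := by
    rw [hβ, show (-τ + μ) / σ = -((τ - μ) / σ) by ring, TQ.stdNormalCDF_neg]
  have hXdown : stdNormalCDF ((-τ - μ) / σ) = α := hα.symm
  have hYup : (1 : ℝ) - stdNormalCDF ((τ - -μ) / σ) = α := by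
    rw [hα, show (-τ - μ) / σ = -((τ - -μ) / σ) by ring, TQ.stdNormalCDF_neg]
  have hYdown : stdNormalCDF ((-τ - -μ) / σ) = β := by
    rw [hβ]; congr 1; ring
  rw [hXup, hXdown] at qX₁m qX₁2 qX₂m qX₂2
  rw [hYup, hYdown] at qY₁m qY₁2 qY₂m qY₂2
  -- quantized integrals
  have iq02 : IndepFun (fun ω => ft τ (X₁ ω)) (fun ω => ft τ (Y₁ ω)) ℙ :=
    i02.comp (TQ.measurable_ft τ) (TQ.measurable_ft τ)
  have iq01 : IndepFun (fun ω => ft τ (X₁ ω)) (fun ω => ft τ (X₂ ω)) ℙ :=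
    i01.comp (TQ.measurable_ft τ) (TQ.measurable_ft τ)
  have iq23 : IndepFun (fun ω => ft τ (Y₁ ω)) (fun ω => ft τ (Y₂ ω)) ℙ :=
    i23.comp (TQ.measurable_ft τ) (TQ.measurable_ft τ)
  have hAq : ∫ ω, (ft τ (X₁ ω) - ft τ (Y₁ ω)) ^ 2 ∂ℙ
      = 2 * (α + β) + 2 * (β - α) ^ 2 := by
    rw [TQ.expect_sub_sq iq02 qX₁i qX₁s qY₁i qY₁s, qX₁2, qX₁m, qY₁2, qY₁m]; ring
  have hBq : ∫ ω, (ft τ (X₁ ω) - ft τ (X₂ ω)) ^ 2 ∂ℙ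
      = 2 * (α + β) - 2 * (β - α) ^ 2 := by
    rw [TQ.expect_sub_sq iq01 qX₁i qX₁s qX₂i qX₂s, qX₁2, qX₁m, qX₂2, qX₂m]; ring
  have hCq : ∫ ω, (ft τ (Y₁ ω) - ft τ (Y₂ ω)) ^ 2 ∂ℙ
      = 2 * (α + β) - 2 * (β - α) ^ 2 := by
    rw [TQ.expect_sub_sq iq23 qY₁i qY₁s qY₂i qY₂s, qY₁2, qY₁m, qY₂2, qY₂m]; ring
  -- facts about α β
  have hαpos : 0 < α := hα ▸ TQ.stdNormalCDF_pos _
  have hβlt : β < 1 := hβ ▸ TQ.stdNormalCDF_lt_one _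
  have hαβ : α ≤ β := by
    rw [hα, hβ]
    apply TQ.stdNormalCDF_mono
    apply div_le_div_of_nonneg_right ?_ hσpos.le
    linarith
  rw [hA, hB, hC, hAq, hBq, hCq]
  exact TQ.final_algebra hμ0 hμ1 hαpos hβlt hαβ hcond
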